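/- (Transitivity of the triality group on the complex 6-sphere.) For all z, z' ∈ 𝕆 with Re(z) = Re(z') = 0 and |z|² = |z'|² = 1, there exists a twisted triality pair (T₁, T₂) such that T₂(z) = z'. -/

import Mathlib

noncomputable section

open scoped Quaternion

/-- The complexified quaternions. -/
abbrev Hq : Type := Quaternion ℂ

theorem q_mul_smul (t : ℂ) (a b : Hq) : a * (t • b) = t • (a * b) := by
  rw [← Quaternion.coe_mul_eq_smul, ← Quaternion.coe_mul_eq_smul, ← mul_assoc,
    ← Quaternion.coe_commutes, mul_assoc]

theorem q_smul_mul (t : ℂ) (a b : Hq) : (t • a) * b = t • (a * b) := by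
  rw [← Quaternion.coe_mul_eq_smul, ← Quaternion.coe_mul_eq_smul, mul_assoc]

/-- The complexified octonions, via the Cayley–Dickson construction. -/
abbrev Oct : Type := Hq × Hq

namespace Oct

/-- Octonion multiplication (Cayley–Dickson construction). -/
def omul (x y : Oct) : Oct := (x.1 * y.1 - star y.2 * x.2, y.2 * x.1 + x.2 * star y.1)

/-- Octonion conjugation. -/
def oconj (x : Oct) : Oct := (star x.1, -x.2)

/-- The unit octonion. -/
def oone : Oct := (1, 0)

/-- Real part of an octonion: the unique scalar with `x + oconj x = (2 * oRe x) • oone`. -/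
def oRe (x : Oct) : ℂ := x.1.re

/-- Squared norm of an octonion: the unique scalar with `omul x (oconj x) = onormSq x • oone`. -/
def onormSq (x : Oct) : ℂ := Quaternion.normSq x.1 + Quaternion.normSq x.2

theorem omul_add (z x y : Oct) : omul z (x + y) = omul z x + omul z y := by
  have h1 : star (x.2 + y.2) = star x.2 + star y.2 := by ext <;> simp <;> ring
  have h2 : star (x.1 + y.1) = star x.1 + star y.1 := by ext <;> simp <;> ring
  simp only [omul, Prod.fst_add, Prod.snd_add, star_add, h1, h2, mul_add, add_mul, Prod.mk_add_mk,
    Prod.mk.injEq]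
  constructor <;> abel

theorem add_omul (x y z : Oct) : omul (x + y) z = omul x z + omul y z := by
  simp only [omul, Prod.fst_add, Prod.snd_add, star_add, mul_add, add_mul, Prod.mk_add_mk,
    Prod.mk.injEq]
  constructor <;> abel

theorem omul_smul (t : ℂ) (z x : Oct) : omul z (t • x) = t • omul z x := by
  simp only [omul, Prod.smul_fst, Prod.smul_snd, Quaternion.star_smul, q_smul_mul,
    q_mul_smul, Prod.smul_mk, smul_sub, smul_add]

theorem smul_omul (t : ℂ) (x z : Oct) : omul (t • x) z = t • omul x z := by
  simp only [omul, Prod.smul_fst, Prod.smul_snd, Quaternion.star_smul, q_smul_mul,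
    q_mul_smul, Prod.smul_mk, smul_sub, smul_add]

/-- Left multiplication `L_z` as a `ℂ`-linear endomorphism of the octonions. -/
def Lmul (z : Oct) : Oct →ₗ[ℂ] Oct where
  toFun x := omul z x
  map_add' x y := omul_add z x y
  map_smul' t x := omul_smul t z x

/-- Right multiplication `R_z` as a `ℂ`-linear endomorphism of the octonions. -/
def Rmul (z : Oct) : Oct →ₗ[ℂ] Oct where
  toFun x := omul x z
  map_add' x y := add_omul x y z
  map_smul' t x := smul_omul t x z

end Oct

namespace Oct

/-- The octonionic determinant of the hermitian matrix
`[[λ₁, c, b̄], [c̄, λ₂, a], [b, ā, λ₃]]`. -/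
def detO (l1 l2 l3 : ℂ) (a b c : Oct) : ℂ :=
  l1 * l2 * l3 + 2 * oRe (omul c (omul a b)) - l1 * onormSq a - l2 * onormSq b - l3 * onormSq c

/-- The associator `[c,b,a] = (c·b)·a − c·(b·a)`. -/
def assoc (c b a : Oct) : Oct := omul (omul c b) a - omul c (omul b a)

/-- `φ(c,b,a) = (1/2)·Re((c·b̄ − b̄·c)·a)`. -/
def phi (c b a : Oct) : ℂ := (1 / 2) * oRe (omul (omul c (oconj b) - omul (oconj b) c) a)

/-- The Ogievetskiî–Dray–Manogue sextic. -/
def SODM (l1 l2 l3 : ℂ) (a b c : Oct) : ℂ :=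
  detO l1 l2 l3 a b c ^ 2 - 4 * phi c b a * detO l1 l2 l3 a b c - onormSq (assoc c b a)

/-- The Cartan cubic `C'` of the hermitian matrix `[[λ₁, c̄, ā], [c, λ₂, b], [a, b̄, λ₃]]`. -/
def cartan' (l1 l2 l3 : ℂ) (a b c : Oct) : ℂ :=
  detO l1 l2 l3 a b c - 2 * oRe (omul c (omul a b)) + 2 * oRe (omul (oconj c) (omul b a))

/-- The sextic `𝔖`. -/
def frakS (l1 l2 l3 : ℂ) (a b c : Oct) : ℂ :=
  (l1 * onormSq a + l2 * onormSq b + l3 * onormSq c - l1 * l2 * l3) ^ 2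
    - 4 * (l1 * onormSq a + l2 * onormSq b + l3 * onormSq c - l1 * l2 * l3)
        * oRe c * oRe (omul a b)
    + 4 * (onormSq b * onormSq a * oRe c ^ 2 + onormSq c * oRe (omul a b) ^ 2
        - onormSq a * onormSq b * onormSq c)

/-- The endomorphism `M_A` of `𝕆³` attached to
`A = [[λ₁, c, b̄], [c̄, λ₂, a], [b, ā, λ₃]] ∈ J₃(𝕆)`. -/
def MA (l1 l2 l3 : ℂ) (a b c : Oct) : Oct × Oct × Oct →ₗ[ℂ] Oct × Oct × Oct where
  toFun p := (l1 • p.1 + omul c p.2.1 + omul (oconj b) p.2.2,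
              omul (oconj c) p.1 + l2 • p.2.1 + omul a p.2.2,
              omul b p.1 + omul (oconj a) p.2.1 + l3 • p.2.2)
  map_add' p q := by
    simp only [Prod.fst_add, Prod.snd_add, omul_add, smul_add, Prod.mk_add_mk, Prod.mk.injEq]
    refine ⟨?_, ?_, ?_⟩ <;> abel
  map_smul' t p := by
    simp only [Prod.smul_fst, Prod.smul_snd, omul_smul, smul_comm t, Prod.smul_mk, smul_add,
      RingHom.id_apply]

/-- The endomorphism `N_A` of `𝕆³` of the twisted octonionic eigenvalue problem. -/
def NA (l1 l2 l3 : ℂ) (a b c : Oct) : Oct × Oct × Oct →ₗ[ℂ] Oct × Oct × Oct where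
  toFun p := (l1 • p.1 + omul p.2.1 c + omul (oconj b) p.2.2,
              omul p.1 (oconj c) + l2 • p.2.1 + omul a p.2.2,
              omul b p.1 + omul (oconj a) p.2.1 + l3 • p.2.2)
  map_add' p q := by
    simp only [Prod.fst_add, Prod.snd_add, omul_add, add_omul, smul_add, Prod.mk_add_mk,
      Prod.mk.injEq]
    refine ⟨?_, ?_, ?_⟩ <;> abel
  map_smul' t p := by
    simp only [Prod.smul_fst, Prod.smul_snd, omul_smul, smul_omul, smul_comm t, Prod.smul_mk,
      smul_add, RingHom.id_apply]

/-- The exceptional Jordan algebra `J₃(𝕆)`, as the 27-dimensional space of tuples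
`(λ₁, λ₂, λ₃, a, b, c)`. -/
abbrev J3 : Type := ℂ × ℂ × ℂ × Oct × Oct × Oct

def MAj (A : J3) : Oct × Oct × Oct →ₗ[ℂ] Oct × Oct × Oct :=
  MA A.1 A.2.1 A.2.2.1 A.2.2.2.1 A.2.2.2.2.1 A.2.2.2.2.2

def NAj (A : J3) : Oct × Oct × Oct →ₗ[ℂ] Oct × Oct × Oct :=
  NA A.1 A.2.1 A.2.2.1 A.2.2.2.1 A.2.2.2.2.1 A.2.2.2.2.2

def SODMj (A : J3) : ℂ := SODM A.1 A.2.1 A.2.2.1 A.2.2.2.1 A.2.2.2.2.1 A.2.2.2.2.2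

def cartan'j (A : J3) : ℂ := cartan' A.1 A.2.1 A.2.2.1 A.2.2.2.1 A.2.2.2.2.1 A.2.2.2.2.2

def frakSj (A : J3) : ℂ := frakS A.1 A.2.1 A.2.2.1 A.2.2.2.1 A.2.2.2.2.1 A.2.2.2.2.2

/-- A twisted triality pair: a pair of `ℂ`-linear norm-preserving bijections of `𝕆` with
`T₁(x)·T₂(y) = T₁(x·y)` for all `x, y`. -/
def TwistedPair (T1 T2 : Oct →ₗ[ℂ] Oct) : Prop :=
  Function.Bijective T1 ∧ Function.Bijective T2 ∧
    (∀ x, onormSq (T1 x) = onormSq x) ∧ (∀ x, onormSq (T2 x) = onormSq x) ∧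
    ∀ x y, omul (T1 x) (T2 y) = T1 (omul x y)

/-- `K(x) = conj (T₁ x̄)`. -/
def Kmap (T1 : Oct →ₗ[ℂ] Oct) (x : Oct) : Oct := oconj (T1 (oconj x))

/-- The twisted `Spin₇`-action on `J₃(𝕆)`:
`(T₁,T₂)·(λ₁, λ₂, λ₃, a, b, c) = (λ₁, λ₂, λ₃, T₁(a), K(b), T₂(c))`. -/
def spinAct (T1 T2 : Oct →ₗ[ℂ] Oct) (A : J3) : J3 :=
  (A.1, A.2.1, A.2.2.1, T1 A.2.2.2.1, Kmap T1 A.2.2.2.2.1, T2 A.2.2.2.2.2)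

/-- The hermitian matrix `[[λ₁, c, b̄], [c̄, λ₂, a], [b, ā, λ₃]]` attached to `A ∈ J₃(𝕆)`,
with complex scalars embedded as multiples of the unit octonion. -/
def toMat (A : J3) : Matrix (Fin 3) (Fin 3) Oct :=
  !![A.1 • oone, A.2.2.2.2.2, oconj A.2.2.2.2.1;
     oconj A.2.2.2.2.2, A.2.1 • oone, A.2.2.2.1;
     A.2.2.2.2.1, oconj A.2.2.2.1, A.2.2.1 • oone]

/-- The action of a (special linear) complex `3×3` matrix `C` on `J₃(𝕆)`, sending the hermitian
matrix `M` of `A` to `Cᵀ · M · C` (the entries of `C` being central scalars). -/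
def slAct (C : Matrix (Fin 3) (Fin 3) ℂ) (A : J3) : J3 :=
  let M : Matrix (Fin 3) (Fin 3) Oct :=
    Matrix.of fun i j => ∑ k, ∑ l, (C k i * C l j) • toMat A k l
  (oRe (M 0 0), oRe (M 1 1), oRe (M 2 2), M 1 2, M 2 0, M 0 1)

/-- The coordinates of `A ∈ J₃(𝕆)` in the fixed standard `ℂ`-basis of `ℂ³ × 𝕆³`. -/
def coords (A : J3) : Fin 27 → ℂ :=
  ![A.1, A.2.1, A.2.2.1,
    A.2.2.2.1.1.re, A.2.2.2.1.1.imI, A.2.2.2.1.1.imJ, A.2.2.2.1.1.imK,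
    A.2.2.2.1.2.re, A.2.2.2.1.2.imI, A.2.2.2.1.2.imJ, A.2.2.2.1.2.imK,
    A.2.2.2.2.1.1.re, A.2.2.2.2.1.1.imI, A.2.2.2.2.1.1.imJ, A.2.2.2.2.1.1.imK,
    A.2.2.2.2.1.2.re, A.2.2.2.2.1.2.imI, A.2.2.2.2.1.2.imJ, A.2.2.2.2.1.2.imK,
    A.2.2.2.2.2.1.re, A.2.2.2.2.2.1.imI, A.2.2.2.2.2.1.imJ, A.2.2.2.2.2.1.imK,
    A.2.2.2.2.2.2.re, A.2.2.2.2.2.2.imI, A.2.2.2.2.2.2.imJ, A.2.2.2.2.2.2.imK]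

end Oct

namespace Oct


/-! ### Auxiliary lemmas for the triality theorem -/

/-- Polarization bilinear form. -/
def bform (x y : Oct) : ℂ := onormSq (x + y) - onormSq x - onormSq y

theorem omul_oone (x : Oct) : omul x oone = x := by
  obtain ⟨x1, x2⟩ := x
  simp [omul, oone]

theorem oone_omul (x : Oct) : omul oone x = x := by
  obtain ⟨x1, x2⟩ := x
  simp [omul, oone]

theorem omul_neg (x y : Oct) : omul x (-y) = -omul x y := by
  rw [← neg_one_smul ℂ y, omul_smul]
  exact neg_one_smul ℂ (omul x y)

theorem neg_omul (x y : Oct) : omul (-x) y = -omul x y := by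
  rw [← neg_one_smul ℂ x, smul_omul]
  exact neg_one_smul ℂ (omul x y)

theorem onormSq_neg (x : Oct) : onormSq (-x) = onormSq x := by
  obtain ⟨x1, x2⟩ := x
  simp [onormSq, Quaternion.normSq_def']

theorem onormSq_smul (t : ℂ) (x : Oct) : onormSq (t • x) = t ^ 2 * onormSq x := by
  obtain ⟨x1, x2⟩ := x
  simp [onormSq, Quaternion.normSq_def', smul_eq_mul]
  ring

theorem oRe_smul (t : ℂ) (x : Oct) : oRe (t • x) = t * oRe x := by
  obtain ⟨x1, x2⟩ := x
  simp [oRe, smul_eq_mul]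

theorem oRe_add (x y : Oct) : oRe (x + y) = oRe x + oRe y := rfl

theorem oRe_neg (x : Oct) : oRe (-x) = -oRe x := rfl

set_option maxHeartbeats 2000000 in
theorem onormSq_omul (x y : Oct) : onormSq (omul x y) = onormSq x * onormSq y := by
  obtain ⟨x1, x2⟩ := x; obtain ⟨y1, y2⟩ := y
  simp only [omul, onormSq, Quaternion.normSq_def', Quaternion.re_sub, Quaternion.re_add,
    Quaternion.imI_sub, Quaternion.imI_add, Quaternion.imJ_sub, Quaternion.imJ_add,
    Quaternion.imK_sub, Quaternion.imK_add, Quaternion.re_mul, Quaternion.imI_mul,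
    Quaternion.imJ_mul, Quaternion.imK_mul, Quaternion.re_star, Quaternion.imI_star,
    Quaternion.imJ_star, Quaternion.imK_star]
  ring

set_option maxHeartbeats 2000000 in
theorem right_alt (x u : Oct) : omul (omul x u) u = omul x (omul u u) := by
  obtain ⟨x1, x2⟩ := x; obtain ⟨u1, u2⟩ := u
  simp only [omul, Prod.mk.injEq]
  constructor <;>
  · ext <;>
      simp only [Quaternion.re_sub, Quaternion.re_add, Quaternion.imI_sub, Quaternion.imI_add,
        Quaternion.imJ_sub, Quaternion.imJ_add, Quaternion.imK_sub, Quaternion.imK_add,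
        Quaternion.re_mul, Quaternion.imI_mul, Quaternion.imJ_mul, Quaternion.imK_mul,
        Quaternion.re_star, Quaternion.imI_star, Quaternion.imJ_star, Quaternion.imK_star] <;>
      ring

set_option maxHeartbeats 2000000 in
theorem left_alt (u x : Oct) : omul u (omul u x) = omul (omul u u) x := by
  obtain ⟨x1, x2⟩ := x; obtain ⟨u1, u2⟩ := u
  simp only [omul, Prod.mk.injEq]
  constructor <;>
  · ext <;>
      simp only [Quaternion.re_sub, Quaternion.re_add, Quaternion.imI_sub, Quaternion.imI_add,
        Quaternion.imJ_sub, Quaternion.imJ_add, Quaternion.imK_sub, Quaternion.imK_add,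
        Quaternion.re_mul, Quaternion.imI_mul, Quaternion.imJ_mul, Quaternion.imK_mul,
        Quaternion.re_star, Quaternion.imI_star, Quaternion.imJ_star, Quaternion.imK_star] <;>
      ring

set_option maxHeartbeats 2000000 in
theorem moufang (x y u : Oct) :
    omul (omul (omul x u) y) u = omul x (omul u (omul y u)) := by
  obtain ⟨x1, x2⟩ := x; obtain ⟨y1, y2⟩ := y; obtain ⟨u1, u2⟩ := u
  simp only [omul, Prod.mk.injEq]
  constructor <;>
  · ext <;>
      simp only [Quaternion.re_sub, Quaternion.re_add, Quaternion.imI_sub, Quaternion.imI_add,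
        Quaternion.imJ_sub, Quaternion.imJ_add, Quaternion.imK_sub, Quaternion.imK_add,
        Quaternion.re_mul, Quaternion.imI_mul, Quaternion.imJ_mul, Quaternion.imK_mul,
        Quaternion.re_star, Quaternion.imI_star, Quaternion.imJ_star, Quaternion.imK_star] <;>
      ring

set_option maxHeartbeats 2000000 in
theorem sq_formula (u : Oct) :
    omul u u = (2 * oRe u) • u - onormSq u • oone := by
  obtain ⟨u1, u2⟩ := u
  simp only [omul, oone, oRe, onormSq, Prod.smul_mk, Prod.mk_sub_mk, Prod.mk.injEq,
    Quaternion.normSq_def']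
  constructor <;>
  · ext <;>
      simp only [Quaternion.re_sub, Quaternion.re_add, Quaternion.imI_sub, Quaternion.imI_add,
        Quaternion.imJ_sub, Quaternion.imJ_add, Quaternion.imK_sub, Quaternion.imK_add,
        Quaternion.re_mul, Quaternion.imI_mul, Quaternion.imJ_mul, Quaternion.imK_mul,
        Quaternion.re_star, Quaternion.imI_star, Quaternion.imJ_star, Quaternion.imK_star,
        Quaternion.re_smul, Quaternion.imI_smul, Quaternion.imJ_smul, Quaternion.imK_smul,
        Quaternion.re_one, Quaternion.imI_one, Quaternion.imJ_one, Quaternion.imK_one,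
        Quaternion.re_zero, Quaternion.imI_zero, Quaternion.imJ_zero, Quaternion.imK_zero,
        smul_eq_mul, smul_zero] <;>
      ring

set_option maxHeartbeats 2000000 in
theorem refl_formula (u a : Oct) (hu : oRe u = 0) (ha : oRe a = 0) :
    omul u (omul a u) = onormSq u • a - bform a u • u := by
  obtain ⟨u1, u2⟩ := u; obtain ⟨a1, a2⟩ := a
  simp only [oRe] at hu ha
  simp only [omul, bform, onormSq, Prod.mk_add_mk, Quaternion.normSq_def', Prod.smul_mk,
    Prod.mk_sub_mk, Prod.mk.injEq, Quaternion.re_add, Quaternion.imI_add, Quaternion.imJ_add,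
    Quaternion.imK_add]
  constructor <;>
  · ext <;>
      simp only [Quaternion.re_sub, Quaternion.re_add, Quaternion.imI_sub, Quaternion.imI_add,
        Quaternion.imJ_sub, Quaternion.imJ_add, Quaternion.imK_sub, Quaternion.imK_add,
        Quaternion.re_mul, Quaternion.imI_mul, Quaternion.imJ_mul, Quaternion.imK_mul,
        Quaternion.re_star, Quaternion.imI_star, Quaternion.imJ_star, Quaternion.imK_star,
        Quaternion.re_smul, Quaternion.imI_smul, Quaternion.imJ_smul, Quaternion.imK_smul,
        smul_eq_mul, hu, ha] <;>
      ring

theorem bform_add_right (x y z : Oct) : bform x (y + z) = bform x y + bform x z := by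
  obtain ⟨x1, x2⟩ := x; obtain ⟨y1, y2⟩ := y; obtain ⟨z1, z2⟩ := z
  simp only [bform, onormSq, Prod.mk_add_mk, Quaternion.normSq_def', Quaternion.re_add,
    Quaternion.imI_add, Quaternion.imJ_add, Quaternion.imK_add]
  ring

theorem bform_smul_right (t : ℂ) (x y : Oct) : bform x (t • y) = t * bform x y := by
  obtain ⟨x1, x2⟩ := x; obtain ⟨y1, y2⟩ := y
  simp only [bform, onormSq, Prod.mk_add_mk, Prod.smul_mk, Quaternion.normSq_def',
    Quaternion.re_add, Quaternion.imI_add, Quaternion.imJ_add, Quaternion.imK_add,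
    Quaternion.re_smul, Quaternion.imI_smul, Quaternion.imJ_smul, Quaternion.imK_smul,
    smul_eq_mul]
  ring

theorem bform_self (x : Oct) : bform x x = 2 * onormSq x := by
  obtain ⟨x1, x2⟩ := x
  simp only [bform, onormSq, Prod.mk_add_mk, Quaternion.normSq_def', Quaternion.re_add,
    Quaternion.imI_add, Quaternion.imJ_add, Quaternion.imK_add]
  ring

theorem onormSq_add_eq (x y : Oct) :
    onormSq (x + y) = onormSq x + onormSq y + bform x y := by
  simp only [bform]; ring

theorem parallelogram (x y : Oct) :
    onormSq (x + y) + onormSq (x - y) = 2 * onormSq x + 2 * onormSq y := by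
  obtain ⟨x1, x2⟩ := x; obtain ⟨y1, y2⟩ := y
  simp only [onormSq, Prod.mk_add_mk, Prod.mk_sub_mk, Quaternion.normSq_def',
    Quaternion.re_add, Quaternion.imI_add, Quaternion.imJ_add, Quaternion.imK_add,
    Quaternion.re_sub, Quaternion.imI_sub, Quaternion.imJ_sub, Quaternion.imK_sub]
  ring

theorem Rmul_apply (u x : Oct) : Rmul u x = omul x u := rfl

theorem Lmul_apply (u x : Oct) : Lmul u x = omul u x := rfl

/-- Composition of twisted pairs. -/
theorem twisted_comp {S1 S2 T1 T2 : Oct →ₗ[ℂ] Oct} (hS : TwistedPair S1 S2)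
    (hT : TwistedPair T1 T2) : TwistedPair (S1 ∘ₗ T1) (S2 ∘ₗ T2) := by
  obtain ⟨hSb1, hSb2, hSn1, hSn2, hSm⟩ := hS
  obtain ⟨hTb1, hTb2, hTn1, hTn2, hTm⟩ := hT
  refine ⟨hSb1.comp hTb1, hSb2.comp hTb2, fun x => ?_, fun x => ?_, fun x y => ?_⟩
  · simp [hSn1, hTn1]
  · simp [hSn2, hTn2]
  · simp only [LinearMap.comp_apply]
    rw [hSm, hTm]

/-- The basic reflection twisted pair and the elementary transitivity step. -/
theorem step (a m : Oct) (ha : oRe a = 0) (hm : oRe m = 0) (ha1 : onormSq a = 1)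
    (hm1 : onormSq m = 1) (hne : onormSq (a + m) ≠ 0) :
    ∃ T1 T2 : Oct →ₗ[ℂ] Oct, TwistedPair T1 T2 ∧ T2 a = m := by
  obtain ⟨c, hc⟩ := IsAlgClosed.exists_pow_nat_eq (k := ℂ) (onormSq (a + m))⁻¹ zero_lt_two
  set u : Oct := c • (a + m) with hu_def
  have hu0 : oRe u = 0 := by rw [hu_def, oRe_smul, oRe_add, ha, hm]; ring
  have hu1 : onormSq u = 1 := by
    rw [hu_def, onormSq_smul, hc, inv_mul_cancel₀ hne]
  have huu : omul u u = -oone := by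
    have h2 : (2 * oRe u) • u = 0 := by rw [hu0, mul_zero]; exact zero_smul ℂ u
    rw [sq_formula, h2, hu1, one_smul, zero_sub]
  have R2 : ∀ x, omul (omul x u) u = -x := fun x => by
    rw [right_alt, huu, omul_neg, omul_oone]
  have L2 : ∀ x, omul u (omul u x) = -x := fun x => by
    rw [left_alt, huu, neg_omul, oone_omul]
  refine ⟨Rmul u, -(Lmul u ∘ₗ Rmul u), ⟨?_, ?_, ?_, ?_, ?_⟩, ?_⟩
  · -- bijectivity of T1
    refine Function.bijective_iff_has_inverse.mpr ⟨fun x => -omul x u, fun x => ?_, fun x => ?_⟩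
    · simp only [Rmul_apply]
      rw [R2, neg_neg]
    · simp only [Rmul_apply]
      rw [neg_omul, R2, neg_neg]
  · -- bijectivity of T2
    refine Function.bijective_iff_has_inverse.mpr
      ⟨fun x => -omul (omul u x) u, fun x => ?_, fun x => ?_⟩
    · simp only [LinearMap.neg_apply, LinearMap.comp_apply, Rmul_apply, Lmul_apply]
      rw [omul_neg, neg_omul, neg_neg, L2, neg_omul, R2, neg_neg]
    · simp only [LinearMap.neg_apply, LinearMap.comp_apply, Rmul_apply, Lmul_apply]
      rw [neg_omul, omul_neg, R2, neg_neg, omul_neg, L2, neg_neg]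
  · intro x
    simp only [Rmul_apply]
    rw [onormSq_omul, hu1, mul_one]
  · intro x
    simp only [LinearMap.neg_apply, LinearMap.comp_apply, Rmul_apply, Lmul_apply]
    rw [onormSq_neg, onormSq_omul, onormSq_omul, hu1, one_mul, mul_one]
  · intro x y
    simp only [LinearMap.neg_apply, LinearMap.comp_apply, Rmul_apply, Lmul_apply]
    rw [omul_neg, ← moufang, R2, neg_omul, neg_omul, neg_neg]
  · -- T2 a = m
    simp only [LinearMap.neg_apply, LinearMap.comp_apply, Rmul_apply, Lmul_apply]
    rw [refl_formula u a hu0 ha, hu1]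
    have hb : bform a u = c * onormSq (a + m) := by
      rw [hu_def, bform_smul_right, bform_add_right, bform_self, ha1,
        onormSq_add_eq, ha1, hm1]
      ring
    rw [hb, hu_def, smul_smul]
    have hone : c * onormSq (a + m) * c = 1 := by
      have : c * onormSq (a + m) * c = c ^ 2 * onormSq (a + m) := by ring
      rw [this, hc, inv_mul_cancel₀ hne]
    rw [hone, one_smul, one_smul]
    abel

/-- reachability relation -/
theorem rel_trans {a b c : Oct}
    (h1 : ∃ T1 T2 : Oct →ₗ[ℂ] Oct, TwistedPair T1 T2 ∧ T2 a = b)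
    (h2 : ∃ T1 T2 : Oct →ₗ[ℂ] Oct, TwistedPair T1 T2 ∧ T2 b = c) :
    ∃ T1 T2 : Oct →ₗ[ℂ] Oct, TwistedPair T1 T2 ∧ T2 a = c := by
  obtain ⟨T1, T2, hT, hTa⟩ := h1
  obtain ⟨S1, S2, hS, hSb⟩ := h2
  exact ⟨S1 ∘ₗ T1, S2 ∘ₗ T2, twisted_comp hS hT, by simp [hTa, hSb]⟩

def e1 : Oct := (⟨0, 1, 0, 0⟩, 0)
def e2 : Oct := (⟨0, 0, 1, 0⟩, 0)

theorem e1_re : oRe e1 = 0 := rfl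
theorem e2_re : oRe e2 = 0 := rfl

theorem e1_norm : onormSq e1 = 1 := by
  show Quaternion.normSq (⟨0, 1, 0, 0⟩ : Hq) + Quaternion.normSq (0 : Hq) = 1
  rw [Quaternion.normSq_def' (⟨0, 1, 0, 0⟩ : Hq)]
  simp [e1, onormSq, Quaternion.normSq_def']

theorem e2_norm : onormSq e2 = 1 := by
  show Quaternion.normSq (⟨0, 0, 1, 0⟩ : Hq) + Quaternion.normSq (0 : Hq) = 1
  rw [Quaternion.normSq_def' (⟨0, 0, 1, 0⟩ : Hq)]
  simp [e2, onormSq, Quaternion.normSq_def']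

theorem e12_norm : onormSq (e1 + e2) = 2 := by
  rw [onormSq]
  erw [Quaternion.normSq_def', Quaternion.normSq_def']
  show (0 + 0 : ℂ) ^ 2 + (1 + 0) ^ 2 + (0 + 1) ^ 2 + (0 + 0) ^ 2
    + ((0 + 0) ^ 2 + (0 + 0) ^ 2 + (0 + 0) ^ 2 + (0 + 0) ^ 2) = 2
  norm_num

theorem ne12_norm : onormSq (-e1 + e2) = 2 := by
  rw [onormSq]
  erw [Quaternion.normSq_def', Quaternion.normSq_def']
  show (-0 + 0 : ℂ) ^ 2 + (-1 + 0) ^ 2 + (-0 + 1) ^ 2 + (-0 + 0) ^ 2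
    + ((-0 + 0) ^ 2 + (-0 + 0) ^ 2 + (-0 + 0) ^ 2 + (-0 + 0) ^ 2) = 2
  norm_num

/-- Every imaginary unit octonion is connected to `e1`. -/
theorem to_e1 (w : Oct) (hw : oRe w = 0) (hw1 : onormSq w = 1) :
    (∃ T1 T2 : Oct →ₗ[ℂ] Oct, TwistedPair T1 T2 ∧ T2 w = e1) ∧
    (∃ T1 T2 : Oct →ₗ[ℂ] Oct, TwistedPair T1 T2 ∧ T2 e1 = w) := by
  have hne1 : oRe (-e1) = 0 := by rw [oRe_neg, e1_re, neg_zero]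
  have hne1n : onormSq (-e1) = 1 := by rw [onormSq_neg, e1_norm]
  by_cases h : onormSq (w + e1) = 0
  · -- route through -e1 and e2
    have hpar : onormSq (w + e1) + onormSq (w - e1) = 4 := by
      rw [parallelogram, hw1, e1_norm]; norm_num
    have h4 : onormSq (w + -e1) ≠ 0 := by
      rw [← sub_eq_add_neg]
      intro h0
      rw [h, h0] at hpar
      norm_num at hpar
    constructor
    · refine rel_trans (step w (-e1) hw hne1 hw1 hne1n h4) ?_
      refine rel_trans (step (-e1) e2 hne1 e2_re hne1n e2_norm (by rw [ne12_norm]; norm_num)) ?_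
      exact step e2 e1 e2_re e1_re e2_norm e1_norm (by rw [add_comm, e12_norm]; norm_num)
    · refine rel_trans (step e1 e2 e1_re e2_re e1_norm e2_norm (by rw [e12_norm]; norm_num)) ?_
      refine rel_trans (step e2 (-e1) e2_re hne1 e2_norm hne1n
        (by rw [add_comm, ne12_norm]; norm_num)) ?_
      exact step (-e1) w hne1 hw hne1n hw1 (by rwa [add_comm])
  · exact ⟨step w e1 hw e1_re hw1 e1_norm h,
      step e1 w e1_re hw e1_norm hw1 (by rwa [add_comm])⟩

/-- Transitivity of the triality group on the complex 6-sphere: for any two purely imaginary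
octonions of squared norm `1`, some twisted triality pair `(T₁, T₂)` has `T₂ z = z'`. -/
theorem triality_transitive_on_sphere (z z' : Oct) (hz : oRe z = 0) (hz' : oRe z' = 0)
    (h1 : onormSq z = 1) (h1' : onormSq z' = 1) :
    ∃ T1 T2 : Oct →ₗ[ℂ] Oct, TwistedPair T1 T2 ∧ T2 z = z' := by
  exact rel_trans (to_e1 z hz h1).1 (to_e1 z' hz' h1').2

end Oct
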